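/- Let n₁, n₂, k₁, k₂ be nonnegative integers with k₁ ≤ n₁ and k₂ ≤ n₂, and set n = n₁ + n₂ and k = k₁ + k₂. Then E_k(n) ≤ E_{k₁}(n₁) + E_{k₂}(n₂); equivalently, D_k(n) ≥ D_{k₁}(n₁) + D_{k₂}(n₂). -/

import Mathlib

/-- A (binary) decision tree over ground set `[n]` (positions `Fin n`):
leaves are labelled with a Boolean output, inner nodes with a query `i ∈ [n]`;
the left subtree corresponds to the answer `i ∉ A`, the right one to `i ∈ A`. -/
inductive DecTree (n : ℕ) : Type
  | leaf : Bool → DecTree n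
  | node : Fin n → DecTree n → DecTree n → DecTree n

namespace DecTree

/-- The height (depth) of a decision tree: the maximum number of queries on a
root-to-leaf path. -/
def depth {n : ℕ} : DecTree n → ℕ
  | leaf _ => 0
  | node _ t0 t1 => max (depth t0) (depth t1) + 1

/-- Evaluate a decision tree on an input set `A ⊆ [n]`. -/
def eval {n : ℕ} : DecTree n → Finset (Fin n) → Bool
  | leaf b, _ => b
  | node i t0 t1, A => if i ∈ A then eval t1 A else eval t0 A

end DecTree

/-- The slice: the `k`-element subsets of `[n]`. -/
def Slice (n k : ℕ) : Type := {A : Finset (Fin n) // A.card = k}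

/-- A decision tree computes `f` on the slice if it evaluates to `f A` for every
`A` in the slice. -/
def Computes {n k : ℕ} (T : DecTree n) (f : Slice n k → Bool) : Prop :=
  ∀ A : Slice n k, T.eval A.val = f A

/-- Deterministic query complexity of `f` on the slice: the minimum height of a
decision tree computing `f`. -/
noncomputable def Dquery (n k : ℕ) (f : Slice n k → Bool) : ℕ :=
  sInf {d : ℕ | ∃ T : DecTree n, T.depth ≤ d ∧ Computes T f}

/-- `Dmax n k`: the maximum deterministic query complexity over all Boolean
functions on the slice of `k`-subsets of `[n]`. -/
noncomputable def Dmax (n k : ℕ) : ℕ :=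
  sSup {d : ℕ | ∃ f : Slice n k → Bool, Dquery n k f = d}

/-- `Equery n k = n - Dmax n k`. -/
noncomputable def Equery (n k : ℕ) : ℕ := n - Dmax n k

-- ### auxiliary development

def PP {n : ℕ} (U S : Finset (Fin n)) (k : ℕ) (A : Finset (Fin n)) : Prop :=
  A ⊆ U ∧ S ⊆ A ∧ A.card = k

def ComputesOn {n : ℕ} (T : DecTree n) (P : Finset (Fin n) → Prop)
    (F : Finset (Fin n) → Bool) : Prop :=
  ∀ A, P A → T.eval A = F A

noncomputable def DOn {n : ℕ} (P : Finset (Fin n) → Prop) (F : Finset (Fin n) → Bool) : ℕ :=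
  sInf {d | ∃ T : DecTree n, T.depth ≤ d ∧ ComputesOn T P F}

def fullTree {n : ℕ} : List (Fin n) → (Finset (Fin n) → Bool) → DecTree n
  | [], F => .leaf (F ∅)
  | i :: l, F => .node i (fullTree l F) (fullTree l (fun A => F (insert i A)))

lemma fullTree_eval {n : ℕ} (l : List (Fin n)) (F : Finset (Fin n) → Bool)
    (A : Finset (Fin n)) : (fullTree l F).eval A = F (A ∩ l.toFinset) := by
  induction l generalizing F with
  | nil => simp [fullTree, DecTree.eval]
  | cons i l ih =>
    simp only [fullTree, DecTree.eval]
    by_cases h : i ∈ A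
    · rw [if_pos h, ih]
      congr 1
      ext x
      simp only [Finset.mem_insert, Finset.mem_inter, List.toFinset_cons]
      constructor
      · rintro (rfl | ⟨hx, hl⟩) <;> simp_all
      · rintro ⟨hx, rfl | hl⟩
        · exact Or.inl rfl
        · exact Or.inr ⟨hx, hl⟩
    · rw [if_neg h, ih]
      congr 1
      ext x
      simp only [Finset.mem_inter, List.toFinset_cons, Finset.mem_insert]
      constructor
      · rintro ⟨hx, hl⟩; exact ⟨hx, Or.inr hl⟩
      · rintro ⟨hx, rfl | hl⟩
        · exact absurd hx h
        · exact ⟨hx, hl⟩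

lemma fullTree_depth {n : ℕ} (l : List (Fin n)) (F : Finset (Fin n) → Bool) :
    (fullTree l F).depth = l.length := by
  induction l generalizing F with
  | nil => simp [fullTree, DecTree.depth]
  | cons i l ih => simp [fullTree, DecTree.depth, ih]

lemma exists_computesOn {n : ℕ} (P : Finset (Fin n) → Prop) (F : Finset (Fin n) → Bool) :
    ∃ T : DecTree n, T.depth ≤ n ∧ ComputesOn T P F := by
  refine ⟨fullTree (List.finRange n) F, ?_, ?_⟩
  · rw [fullTree_depth]; simp
  · intro A _
    rw [fullTree_eval]
    congr 1
    simp

lemma DOn_spec {n : ℕ} (P : Finset (Fin n) → Prop) (F : Finset (Fin n) → Bool) :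
    ∃ T : DecTree n, T.depth ≤ DOn P F ∧ ComputesOn T P F := by
  have h : {d | ∃ T : DecTree n, T.depth ≤ d ∧ ComputesOn T P F}.Nonempty :=
    ⟨n, exists_computesOn P F⟩
  exact Nat.sInf_mem h

lemma DOn_le {n : ℕ} {P : Finset (Fin n) → Prop} {F : Finset (Fin n) → Bool} {d : ℕ}
    (h : ∃ T : DecTree n, T.depth ≤ d ∧ ComputesOn T P F) : DOn P F ≤ d :=
  Nat.sInf_le h

lemma DOn_eq_zero_of_const {n : ℕ} {P : Finset (Fin n) → Prop} {F : Finset (Fin n) → Bool}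
    (c : Bool) (h : ∀ A, P A → F A = c) : DOn P F = 0 :=
  Nat.le_zero.mp (DOn_le ⟨.leaf c, le_refl _, fun A hA => (h A hA).symm⟩)

lemma DOn_mono {n : ℕ} {P Q : Finset (Fin n) → Prop} {F : Finset (Fin n) → Bool}
    (h : ∀ A, P A → Q A) : DOn P F ≤ DOn Q F := by
  obtain ⟨T, hd, hc⟩ := DOn_spec Q F
  exact DOn_le ⟨T, hd, fun A hA => hc A (h A hA)⟩

lemma DOn_combine {n : ℕ} (i : Fin n) (U S : Finset (Fin n)) (k : ℕ)
    (F : Finset (Fin n) → Bool) :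
    DOn (PP U S k) F ≤ max (DOn (PP (U.erase i) S k) F) (DOn (PP U (insert i S) k) F) + 1 := by
  obtain ⟨T₀, hd₀, hc₀⟩ := DOn_spec (PP (U.erase i) S k) F
  obtain ⟨T₁, hd₁, hc₁⟩ := DOn_spec (PP U (insert i S) k) F
  refine DOn_le ⟨.node i T₀ T₁, ?_, ?_⟩
  · simp only [DecTree.depth]; omega
  · rintro A ⟨hAU, hSA, hk⟩
    simp only [DecTree.eval]
    by_cases hiA : i ∈ A
    · rw [if_pos hiA]
      exact hc₁ A ⟨hAU, Finset.insert_subset hiA hSA, hk⟩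
    · rw [if_neg hiA]
      refine hc₀ A ⟨fun x hx => Finset.mem_erase.mpr ⟨?_, hAU hx⟩, hSA, hk⟩
      rintro rfl; exact hiA hx

lemma PP_union {n : ℕ} {U₁ S₁ U₂ S₂ : Finset (Fin n)} {k₁ k₂ : ℕ}
    {A₁ A₂ : Finset (Fin n)} (hd : Disjoint U₁ U₂)
    (h₁ : PP U₁ S₁ k₁ A₁) (h₂ : PP U₂ S₂ k₂ A₂) :
    PP (U₁ ∪ U₂) (S₁ ∪ S₂) (k₁ + k₂) (A₁ ∪ A₂) := by
  obtain ⟨hA₁U, hS₁, hc₁⟩ := h₁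
  obtain ⟨hA₂U, hS₂, hc₂⟩ := h₂
  refine ⟨Finset.union_subset_union hA₁U hA₂U, Finset.union_subset_union hS₁ hS₂, ?_⟩
  rw [Finset.card_union_of_disjoint (Finset.disjoint_of_subset_left hA₁U
    (Finset.disjoint_of_subset_right hA₂U hd)), hc₁, hc₂]

lemma inter_union_self {n : ℕ} {U₁ U₂ A₁ A₂ : Finset (Fin n)} (hd : Disjoint U₁ U₂)
    (h₁ : A₁ ⊆ U₁) (h₂ : A₂ ⊆ U₂) : (A₁ ∪ A₂) ∩ U₁ = A₁ := by
  ext x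
  simp only [Finset.mem_inter, Finset.mem_union]
  constructor
  · rintro ⟨h | h, hxU⟩
    · exact h
    · exact absurd hxU (Finset.disjoint_right.mp hd (h₂ h))
  · intro hx
    exact ⟨Or.inl hx, h₁ hx⟩

lemma inter_erase_of_not_mem {n : ℕ} {A U : Finset (Fin n)} {i : Fin n} (h : i ∉ A) :
    A ∩ U.erase i = A ∩ U := by
  ext x
  simp only [Finset.mem_inter, Finset.mem_erase]
  constructor
  · rintro ⟨hx, _, hxU⟩; exact ⟨hx, hxU⟩
  · rintro ⟨hx, hxU⟩
    exact ⟨hx, fun he => h (he ▸ hx), hxU⟩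

lemma mainLemma {n : ℕ} (T : DecTree n) :
    ∀ (U₁ S₁ U₂ S₂ : Finset (Fin n)) (k₁ k₂ : ℕ) (F₁ F₂ G : Finset (Fin n) → Bool),
    Disjoint U₁ U₂ →
    (∃ A, PP U₁ S₁ k₁ A) → (∃ A, PP U₂ S₂ k₂ A) →
    (∀ A, PP (U₁ ∪ U₂) (S₁ ∪ S₂) (k₁ + k₂) A → (A ∩ U₁).card = k₁ →
      G A = xor (F₁ (A ∩ U₁)) (F₂ (A ∩ U₂))) →
    ComputesOn T (PP (U₁ ∪ U₂) (S₁ ∪ S₂) (k₁ + k₂)) G →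
    DOn (PP U₁ S₁ k₁) F₁ + DOn (PP U₂ S₂ k₂) F₂ ≤ T.depth := by
  induction T with
  | leaf b =>
    rintro U₁ S₁ U₂ S₂ k₁ k₂ F₁ F₂ G hd ⟨A₁, hA₁⟩ ⟨A₂, hA₂⟩ Hg hT
    have key : ∀ B₁ B₂, PP U₁ S₁ k₁ B₁ → PP U₂ S₂ k₂ B₂ → xor (F₁ B₁) (F₂ B₂) = b := by
      intro B₁ B₂ hB₁ hB₂
      have hP := PP_union hd hB₁ hB₂
      have h1 : (B₁ ∪ B₂) ∩ U₁ = B₁ := inter_union_self hd hB₁.1 hB₂.1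
      have h2 : (B₁ ∪ B₂) ∩ U₂ = B₂ := by
        rw [Finset.union_comm]
        exact inter_union_self hd.symm hB₂.1 hB₁.1
      have hg := Hg _ hP (by rw [h1]; exact hB₁.2.2)
      rw [h1, h2] at hg
      have hb := hT _ hP
      simp only [DecTree.eval] at hb
      rw [← hg, hb]
    have z1 : DOn (PP U₁ S₁ k₁) F₁ = 0 := by
      refine DOn_eq_zero_of_const (xor b (F₂ A₂)) (fun B hB => ?_)
      have hk := key B A₂ hB hA₂
      cases h1 : F₁ B <;> cases h2 : F₂ A₂ <;> cases b <;> simp_all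
    have z2 : DOn (PP U₂ S₂ k₂) F₂ = 0 := by
      refine DOn_eq_zero_of_const (xor (F₁ A₁) b) (fun B hB => ?_)
      have hk := key A₁ B hA₁ hB
      cases h1 : F₂ B <;> cases h2 : F₁ A₁ <;> cases b <;> simp_all
    rw [z1, z2]
    exact Nat.zero_le _
  | node i t₀ t₁ ih₀ ih₁ =>
    rintro U₁ S₁ U₂ S₂ k₁ k₂ F₁ F₂ G hd hne₁ hne₂ Hg hT
    simp only [DecTree.depth]
    by_cases hiU : i ∈ U₁ ∪ U₂
    swap
    · -- i is never in the input
      have hc : ComputesOn t₀ (PP (U₁ ∪ U₂) (S₁ ∪ S₂) (k₁ + k₂)) G := by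
        intro A hA
        have h := hT A hA
        simp only [DecTree.eval] at h
        rwa [if_neg (fun hmem => hiU (hA.1 hmem))] at h
      have := ih₀ U₁ S₁ U₂ S₂ k₁ k₂ F₁ F₂ G hd hne₁ hne₂ Hg hc
      omega
    by_cases hiS : i ∈ S₁ ∪ S₂
    · -- i is always in the input
      have hc : ComputesOn t₁ (PP (U₁ ∪ U₂) (S₁ ∪ S₂) (k₁ + k₂)) G := by
        intro A hA
        have h := hT A hA
        simp only [DecTree.eval] at h
        rwa [if_pos (hA.2.1 hiS)] at h
      have := ih₁ U₁ S₁ U₂ S₂ k₁ k₂ F₁ F₂ G hd hne₁ hne₂ Hg hc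
      omega
    simp only [Finset.mem_union] at hiU hiS
    push_neg at hiS
    obtain ⟨hiS₁, hiS₂⟩ := hiS
    rcases hiU with hiU₁ | hiU₂
    · -- the query is in block 1
      have hiU₂ : i ∉ U₂ := Finset.disjoint_left.mp hd hiU₁
      have hnotA : ∀ A : Finset (Fin n), A ⊆ (U₁.erase i) ∪ U₂ → i ∉ A := by
        intro A hAU hmem
        rcases Finset.mem_union.mp (hAU hmem) with h | h
        · exact (Finset.mem_erase.mp h).1 rfl
        · exact hiU₂ h
      have comp₀ : ComputesOn t₀ (PP ((U₁.erase i) ∪ U₂) (S₁ ∪ S₂) (k₁ + k₂)) G := by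
        rintro A ⟨hAU, hSA, hk⟩
        have h := hT A ⟨hAU.trans (Finset.union_subset_union_left (Finset.erase_subset i U₁)),
          hSA, hk⟩
        simp only [DecTree.eval, if_neg (hnotA A hAU)] at h
        exact h
      have comp₁ : ComputesOn t₁ (PP (U₁ ∪ U₂) ((insert i S₁) ∪ S₂) (k₁ + k₂)) G := by
        rintro A ⟨hAU, hSA, hk⟩
        have hiA : i ∈ A := hSA (Finset.mem_union_left _ (Finset.mem_insert_self i S₁))
        have h := hT A ⟨hAU,
          (Finset.union_subset_union_left (Finset.subset_insert i S₁)).trans hSA, hk⟩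
        simp only [DecTree.eval, if_pos hiA] at h
        exact h
      have Hg₀ : ∀ A, PP ((U₁.erase i) ∪ U₂) (S₁ ∪ S₂) (k₁ + k₂) A →
          (A ∩ (U₁.erase i)).card = k₁ →
          G A = xor (F₁ (A ∩ (U₁.erase i))) (F₂ (A ∩ U₂)) := by
        rintro A ⟨hAU, hSA, hk⟩ hc
        have hint : A ∩ U₁.erase i = A ∩ U₁ := inter_erase_of_not_mem (hnotA A hAU)
        rw [hint] at hc ⊢
        exact Hg A ⟨hAU.trans (Finset.union_subset_union_left (Finset.erase_subset i U₁)),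
          hSA, hk⟩ hc
      have Hg₁ : ∀ A, PP (U₁ ∪ U₂) ((insert i S₁) ∪ S₂) (k₁ + k₂) A →
          (A ∩ U₁).card = k₁ → G A = xor (F₁ (A ∩ U₁)) (F₂ (A ∩ U₂)) := by
        rintro A ⟨hAU, hSA, hk⟩ hc
        exact Hg A ⟨hAU,
          (Finset.union_subset_union_left (Finset.subset_insert i S₁)).trans hSA, hk⟩ hc
      by_cases he₁ : ∃ A, PP U₁ (insert i S₁) k₁ A
      · by_cases he₀ : ∃ A, PP (U₁.erase i) S₁ k₁ A
        · have hcomb := DOn_combine i U₁ S₁ k₁ F₁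
          rcases le_total (DOn (PP (U₁.erase i) S₁ k₁) F₁)
              (DOn (PP U₁ (insert i S₁) k₁) F₁) with hle | hle
          · have h := ih₁ U₁ (insert i S₁) U₂ S₂ k₁ k₂ F₁ F₂ G hd he₁ hne₂ Hg₁ comp₁
            rw [max_eq_right hle] at hcomb
            omega
          · have h := ih₀ (U₁.erase i) S₁ U₂ S₂ k₁ k₂ F₁ F₂ G
              (Finset.disjoint_of_subset_left (Finset.erase_subset i U₁) hd) he₀ hne₂ Hg₀ comp₀
            rw [max_eq_left hle] at hcomb
            omega
        · -- no input avoids i within block 1: restrict to the "i ∈ A" branch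
          have hmono : DOn (PP U₁ S₁ k₁) F₁ ≤ DOn (PP U₁ (insert i S₁) k₁) F₁ := by
            refine DOn_mono (fun A hA => ?_)
            obtain ⟨hAU, hSA, hk⟩ := hA
            by_cases hiA : i ∈ A
            · exact ⟨hAU, Finset.insert_subset hiA hSA, hk⟩
            · exact absurd ⟨fun x hx => Finset.mem_erase.mpr
                ⟨fun he => hiA (he ▸ hx), hAU hx⟩, hSA, hk⟩ (fun h => he₀ ⟨A, h⟩)
          have h := ih₁ U₁ (insert i S₁) U₂ S₂ k₁ k₂ F₁ F₂ G hd he₁ hne₂ Hg₁ comp₁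
          omega
      · -- no input contains i within block 1: restrict to the "i ∉ A" branch
        have hmono : DOn (PP U₁ S₁ k₁) F₁ ≤ DOn (PP (U₁.erase i) S₁ k₁) F₁ := by
          refine DOn_mono (fun A hA => ?_)
          obtain ⟨hAU, hSA, hk⟩ := hA
          by_cases hiA : i ∈ A
          · exact absurd ⟨hAU, Finset.insert_subset hiA hSA, hk⟩ (fun h => he₁ ⟨A, h⟩)
          · exact ⟨fun x hx => Finset.mem_erase.mpr ⟨fun he => hiA (he ▸ hx), hAU hx⟩, hSA, hk⟩
        have he₀ : ∃ A, PP (U₁.erase i) S₁ k₁ A := by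
          obtain ⟨A, hAU, hSA, hk⟩ := hne₁
          by_cases hiA : i ∈ A
          · exact absurd ⟨hAU, Finset.insert_subset hiA hSA, hk⟩ (fun h => he₁ ⟨A, h⟩)
          · exact ⟨A, fun x hx => Finset.mem_erase.mpr ⟨fun he => hiA (he ▸ hx), hAU hx⟩, hSA, hk⟩
        have h := ih₀ (U₁.erase i) S₁ U₂ S₂ k₁ k₂ F₁ F₂ G
          (Finset.disjoint_of_subset_left (Finset.erase_subset i U₁) hd) he₀ hne₂ Hg₀ comp₀
        omega
    · -- the query is in block 2 (mirror argument)
      have hiU₁ : i ∉ U₁ := Finset.disjoint_right.mp hd hiU₂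
      have hnotA : ∀ A : Finset (Fin n), A ⊆ U₁ ∪ (U₂.erase i) → i ∉ A := by
        intro A hAU hmem
        rcases Finset.mem_union.mp (hAU hmem) with h | h
        · exact hiU₁ h
        · exact (Finset.mem_erase.mp h).1 rfl
      have comp₀ : ComputesOn t₀ (PP (U₁ ∪ (U₂.erase i)) (S₁ ∪ S₂) (k₁ + k₂)) G := by
        rintro A ⟨hAU, hSA, hk⟩
        have h := hT A ⟨hAU.trans (Finset.union_subset_union_right (Finset.erase_subset i U₂)),
          hSA, hk⟩
        simp only [DecTree.eval, if_neg (hnotA A hAU)] at h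
        exact h
      have comp₁ : ComputesOn t₁ (PP (U₁ ∪ U₂) (S₁ ∪ (insert i S₂)) (k₁ + k₂)) G := by
        rintro A ⟨hAU, hSA, hk⟩
        have hiA : i ∈ A := hSA (Finset.mem_union_right _ (Finset.mem_insert_self i S₂))
        have h := hT A ⟨hAU,
          (Finset.union_subset_union_right (Finset.subset_insert i S₂)).trans hSA, hk⟩
        simp only [DecTree.eval, if_pos hiA] at h
        exact h
      have Hg₀ : ∀ A, PP (U₁ ∪ (U₂.erase i)) (S₁ ∪ S₂) (k₁ + k₂) A →
          (A ∩ U₁).card = k₁ →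
          G A = xor (F₁ (A ∩ U₁)) (F₂ (A ∩ (U₂.erase i))) := by
        rintro A ⟨hAU, hSA, hk⟩ hc
        have hint : A ∩ U₂.erase i = A ∩ U₂ := inter_erase_of_not_mem (hnotA A hAU)
        rw [hint]
        exact Hg A ⟨hAU.trans (Finset.union_subset_union_right (Finset.erase_subset i U₂)),
          hSA, hk⟩ hc
      have Hg₁ : ∀ A, PP (U₁ ∪ U₂) (S₁ ∪ (insert i S₂)) (k₁ + k₂) A →
          (A ∩ U₁).card = k₁ → G A = xor (F₁ (A ∩ U₁)) (F₂ (A ∩ U₂)) := by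
        rintro A ⟨hAU, hSA, hk⟩ hc
        exact Hg A ⟨hAU,
          (Finset.union_subset_union_right (Finset.subset_insert i S₂)).trans hSA, hk⟩ hc
      by_cases he₁ : ∃ A, PP U₂ (insert i S₂) k₂ A
      · by_cases he₀ : ∃ A, PP (U₂.erase i) S₂ k₂ A
        · have hcomb := DOn_combine i U₂ S₂ k₂ F₂
          rcases le_total (DOn (PP (U₂.erase i) S₂ k₂) F₂)
              (DOn (PP U₂ (insert i S₂) k₂) F₂) with hle | hle
          · have h := ih₁ U₁ S₁ U₂ (insert i S₂) k₁ k₂ F₁ F₂ G hd hne₁ he₁ Hg₁ comp₁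
            rw [max_eq_right hle] at hcomb
            omega
          · have h := ih₀ U₁ S₁ (U₂.erase i) S₂ k₁ k₂ F₁ F₂ G
              (Finset.disjoint_of_subset_right (Finset.erase_subset i U₂) hd) hne₁ he₀ Hg₀ comp₀
            rw [max_eq_left hle] at hcomb
            omega
        · have hmono : DOn (PP U₂ S₂ k₂) F₂ ≤ DOn (PP U₂ (insert i S₂) k₂) F₂ := by
            refine DOn_mono (fun A hA => ?_)
            obtain ⟨hAU, hSA, hk⟩ := hA
            by_cases hiA : i ∈ A
            · exact ⟨hAU, Finset.insert_subset hiA hSA, hk⟩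
            · exact absurd ⟨fun x hx => Finset.mem_erase.mpr
                ⟨fun he => hiA (he ▸ hx), hAU hx⟩, hSA, hk⟩ (fun h => he₀ ⟨A, h⟩)
          have h := ih₁ U₁ S₁ U₂ (insert i S₂) k₁ k₂ F₁ F₂ G hd hne₁ he₁ Hg₁ comp₁
          omega
      · have hmono : DOn (PP U₂ S₂ k₂) F₂ ≤ DOn (PP (U₂.erase i) S₂ k₂) F₂ := by
          refine DOn_mono (fun A hA => ?_)
          obtain ⟨hAU, hSA, hk⟩ := hA
          by_cases hiA : i ∈ A
          · exact absurd ⟨hAU, Finset.insert_subset hiA hSA, hk⟩ (fun h => he₁ ⟨A, h⟩)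
          · exact ⟨fun x hx => Finset.mem_erase.mpr ⟨fun he => hiA (he ▸ hx), hAU hx⟩, hSA, hk⟩
        have he₀ : ∃ A, PP (U₂.erase i) S₂ k₂ A := by
          obtain ⟨A, hAU, hSA, hk⟩ := hne₂
          by_cases hiA : i ∈ A
          · exact absurd ⟨hAU, Finset.insert_subset hiA hSA, hk⟩ (fun h => he₁ ⟨A, h⟩)
          · exact ⟨A, fun x hx => Finset.mem_erase.mpr ⟨fun he => hiA (he ▸ hx), hAU hx⟩, hSA, hk⟩
        have h := ih₀ U₁ S₁ (U₂.erase i) S₂ k₁ k₂ F₁ F₂ G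
          (Finset.disjoint_of_subset_right (Finset.erase_subset i U₂) hd) hne₁ he₀ Hg₀ comp₀
        omega

-- ### pulling trees back along the two block embeddings

def pull1 {n₁ n₂ : ℕ} : DecTree (n₁ + n₂) → DecTree n₁
  | .leaf b => .leaf b
  | .node j t0 t1 =>
    if h : (j : ℕ) < n₁ then .node ⟨j, h⟩ (pull1 t0) (pull1 t1) else pull1 t0

lemma pull1_depth {n₁ n₂ : ℕ} (T : DecTree (n₁ + n₂)) : (pull1 T).depth ≤ T.depth := by
  induction T with
  | leaf b => simp [pull1, DecTree.depth]
  | node j t0 t1 ih0 ih1 =>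
    simp only [pull1]
    split
    · simp only [DecTree.depth]; omega
    · simp only [DecTree.depth]; omega

lemma pull1_eval {n₁ n₂ : ℕ} (T : DecTree (n₁ + n₂)) (A : Finset (Fin n₁)) :
    (pull1 T).eval A = T.eval (A.map (Fin.castAddEmb n₂)) := by
  induction T with
  | leaf b => simp [pull1, DecTree.eval]
  | node j t0 t1 ih0 ih1 =>
    simp only [pull1]
    split
    · next h =>
      simp only [DecTree.eval]
      have hmem : (j ∈ A.map (Fin.castAddEmb n₂)) ↔ ⟨(j : ℕ), h⟩ ∈ A := by
        simp only [Finset.mem_map]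
        constructor
        · rintro ⟨a, ha, rfl⟩
          have he : (⟨((Fin.castAddEmb n₂ a : Fin (n₁ + n₂)) : ℕ), h⟩ : Fin n₁) = a := by
            apply Fin.ext
            simp
          rwa [he]
        · intro ha
          exact ⟨⟨(j : ℕ), h⟩, ha, by apply Fin.ext; simp⟩
      by_cases hj : (⟨(j : ℕ), h⟩ : Fin n₁) ∈ A
      · rw [if_pos hj, if_pos (hmem.mpr hj), ih1]
      · rw [if_neg hj, if_neg (fun hc => hj (hmem.mp hc)), ih0]
    · next h =>
      simp only [DecTree.eval]
      have hmem : j ∉ A.map (Fin.castAddEmb n₂) := by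
        simp only [Finset.mem_map]
        rintro ⟨a, _, rfl⟩
        exact h a.isLt
      rw [if_neg hmem, ih0]

def pull2 {n₁ n₂ : ℕ} : DecTree (n₁ + n₂) → DecTree n₂
  | .leaf b => .leaf b
  | .node j t0 t1 =>
    if h : n₁ ≤ (j : ℕ) then
      .node ⟨(j : ℕ) - n₁, by have := j.isLt; omega⟩ (pull2 t0) (pull2 t1)
    else pull2 t0

lemma pull2_depth {n₁ n₂ : ℕ} (T : DecTree (n₁ + n₂)) : (pull2 T).depth ≤ T.depth := by
  induction T with
  | leaf b => simp [pull2, DecTree.depth]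
  | node j t0 t1 ih0 ih1 =>
    simp only [pull2]
    split
    · simp only [DecTree.depth]; omega
    · simp only [DecTree.depth]; omega

lemma pull2_eval {n₁ n₂ : ℕ} (T : DecTree (n₁ + n₂)) (A : Finset (Fin n₂)) :
    (pull2 T).eval A = T.eval (A.map (Fin.natAddEmb n₁)) := by
  induction T with
  | leaf b => simp [pull2, DecTree.eval]
  | node j t0 t1 ih0 ih1 =>
    simp only [pull2]
    split
    · next h =>
      have hlt : (j : ℕ) - n₁ < n₂ := by have := j.isLt; omega
      simp only [DecTree.eval]
      have hmem : (j ∈ A.map (Fin.natAddEmb n₁)) ↔ ⟨(j : ℕ) - n₁, hlt⟩ ∈ A := by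
        simp only [Finset.mem_map]
        constructor
        · rintro ⟨a, ha, rfl⟩
          have he : (⟨((Fin.natAddEmb n₁ a : Fin (n₁ + n₂)) : ℕ) - n₁, hlt⟩ : Fin n₂) = a := by
            apply Fin.ext
            simp
          rwa [he]
        · intro ha
          refine ⟨⟨(j : ℕ) - n₁, hlt⟩, ha, ?_⟩
          apply Fin.ext
          simp only [Fin.natAddEmb_apply, Fin.coe_natAdd]
          omega
      by_cases hj : (⟨(j : ℕ) - n₁, hlt⟩ : Fin n₂) ∈ A
      · rw [if_pos hj, if_pos (hmem.mpr hj), ih1]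
      · rw [if_neg hj, if_neg (fun hc => hj (hmem.mp hc)), ih0]
    · next h =>
      simp only [DecTree.eval]
      have hmem : j ∉ A.map (Fin.natAddEmb n₁) := by
        simp only [Finset.mem_map]
        rintro ⟨a, _, rfl⟩
        exact h (Nat.le_add_right n₁ a)
      rw [if_neg hmem, ih0]

-- ### the two blocks inside `Fin (n₁ + n₂)`

def B1 (n₁ n₂ : ℕ) : Finset (Fin (n₁ + n₂)) := Finset.univ.map (Fin.castAddEmb n₂)
def B2 (n₁ n₂ : ℕ) : Finset (Fin (n₁ + n₂)) := Finset.univ.map (Fin.natAddEmb n₁)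

lemma mem_B1 {n₁ n₂ : ℕ} {x : Fin (n₁ + n₂)} : x ∈ B1 n₁ n₂ ↔ (x : ℕ) < n₁ := by
  simp only [B1, Finset.mem_map, Finset.mem_univ, true_and]
  constructor
  · rintro ⟨a, rfl⟩
    simpa using a.isLt
  · intro h
    exact ⟨⟨(x : ℕ), h⟩, by apply Fin.ext; simp⟩

lemma mem_B2 {n₁ n₂ : ℕ} {x : Fin (n₁ + n₂)} : x ∈ B2 n₁ n₂ ↔ n₁ ≤ (x : ℕ) := by
  simp only [B2, Finset.mem_map, Finset.mem_univ, true_and]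
  constructor
  · rintro ⟨a, rfl⟩
    simp
  · intro h
    refine ⟨⟨(x : ℕ) - n₁, by have := x.isLt; omega⟩, by
      apply Fin.ext
      simp only [Fin.natAddEmb_apply, Fin.coe_natAdd]
      omega⟩

noncomputable def down1 {n₁ n₂ : ℕ} (B : Finset (Fin (n₁ + n₂))) : Finset (Fin n₁) :=
  B.preimage (Fin.castAddEmb n₂) ((Fin.castAddEmb n₂).injective.injOn)

noncomputable def down2 {n₁ n₂ : ℕ} (B : Finset (Fin (n₁ + n₂))) : Finset (Fin n₂) :=
  B.preimage (Fin.natAddEmb n₁) ((Fin.natAddEmb n₁).injective.injOn)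

lemma down1_map {n₁ n₂ : ℕ} (A : Finset (Fin n₁)) :
    down1 (n₂ := n₂) (A.map (Fin.castAddEmb n₂)) = A := by
  ext a
  simp [down1, Finset.mem_preimage]

lemma down2_map {n₁ n₂ : ℕ} (A : Finset (Fin n₂)) :
    down2 (n₁ := n₁) (A.map (Fin.natAddEmb n₁)) = A := by
  ext a
  simp [down2, Finset.mem_preimage]

-- the extensions of slice functions on the blocks to arbitrary finsets
noncomputable def F1 (n₁ n₂ k₁ : ℕ) (f₁ : Slice n₁ k₁ → Bool) : Finset (Fin (n₁ + n₂)) → Bool :=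
  fun B => if h : (down1 B).card = k₁ then f₁ ⟨down1 B, h⟩ else false

noncomputable def F2 (n₁ n₂ k₂ : ℕ) (f₂ : Slice n₂ k₂ → Bool) : Finset (Fin (n₁ + n₂)) → Bool :=
  fun B => if h : (down2 B).card = k₂ then f₂ ⟨down2 B, h⟩ else false

noncomputable def GG (n₁ n₂ k₁ k₂ : ℕ) (f₁ : Slice n₁ k₁ → Bool) (f₂ : Slice n₂ k₂ → Bool) :
    Finset (Fin (n₁ + n₂)) → Bool :=
  fun B => xor (F1 n₁ n₂ k₁ f₁ (B ∩ B1 n₁ n₂)) (F2 n₁ n₂ k₂ f₂ (B ∩ B2 n₁ n₂))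

noncomputable def gg (n₁ n₂ k₁ k₂ : ℕ) (f₁ : Slice n₁ k₁ → Bool) (f₂ : Slice n₂ k₂ → Bool) :
    Slice (n₁ + n₂) (k₁ + k₂) → Bool :=
  fun A => GG n₁ n₂ k₁ k₂ f₁ f₂ A.val

-- ### generic facts about `Dquery` and `Dmax`

lemma exists_computes (n k : ℕ) (f : Slice n k → Bool) :
    ∃ T : DecTree n, T.depth ≤ n ∧ Computes T f := by
  refine ⟨fullTree (List.finRange n) (fun B => if h : B.card = k then f ⟨B, h⟩ else false),
    ?_, fun A => ?_⟩
  · rw [fullTree_depth]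
    simp
  · rw [fullTree_eval]
    simp only [List.toFinset_finRange, Finset.inter_univ]
    rw [dif_pos A.prop]
    exact congrArg f (Subtype.coe_eta A A.prop)

lemma Dquery_le_n (n k : ℕ) (f : Slice n k → Bool) : Dquery n k f ≤ n :=
  Nat.sInf_le (exists_computes n k f)

lemma Dquery_spec (n k : ℕ) (f : Slice n k → Bool) :
    ∃ T : DecTree n, T.depth ≤ Dquery n k f ∧ Computes T f := by
  have h : {d : ℕ | ∃ T : DecTree n, T.depth ≤ d ∧ Computes T f}.Nonempty :=
    ⟨n, exists_computes n k f⟩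
  exact Nat.sInf_mem h

lemma Dmax_nonempty (n k : ℕ) : {d : ℕ | ∃ f : Slice n k → Bool, Dquery n k f = d}.Nonempty :=
  ⟨Dquery n k (fun _ => false), fun _ => false, rfl⟩

lemma Dmax_bdd (n k : ℕ) : n ∈ upperBounds {d : ℕ | ∃ f : Slice n k → Bool, Dquery n k f = d} := by
  rintro d ⟨f, rfl⟩
  exact Dquery_le_n n k f

lemma Dmax_le_n (n k : ℕ) : Dmax n k ≤ n :=
  csSup_le (Dmax_nonempty n k) (Dmax_bdd n k)

lemma exists_Dmax (n k : ℕ) : ∃ f : Slice n k → Bool, Dquery n k f = Dmax n k :=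
  Nat.sSup_mem (Dmax_nonempty n k) ⟨n, Dmax_bdd n k⟩

lemma Dquery_le_Dmax (n k : ℕ) (f : Slice n k → Bool) : Dquery n k f ≤ Dmax n k :=
  le_csSup ⟨n, Dmax_bdd n k⟩ ⟨f, rfl⟩

-- ### bridging lemmas

lemma Dquery_le_DOn1 {n₁ n₂ k₁ : ℕ} (f₁ : Slice n₁ k₁ → Bool) :
    Dquery n₁ k₁ f₁ ≤ DOn (PP (B1 n₁ n₂) ∅ k₁) (F1 n₁ n₂ k₁ f₁) := by
  obtain ⟨T, hdep, hc⟩ := DOn_spec (PP (B1 n₁ n₂) ∅ k₁) (F1 n₁ n₂ k₁ f₁)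
  refine Nat.sInf_le ⟨pull1 T, (pull1_depth T).trans hdep, fun A => ?_⟩
  rw [pull1_eval]
  have hP : PP (B1 n₁ n₂) ∅ k₁ (A.val.map (Fin.castAddEmb n₂)) :=
    ⟨Finset.map_subset_map.mpr (Finset.subset_univ _), Finset.empty_subset _,
      by rw [Finset.card_map]; exact A.prop⟩
  rw [hc _ hP]
  simp only [F1, down1_map]
  rw [dif_pos A.prop]
  exact congrArg f₁ (Subtype.coe_eta A A.prop)

lemma Dquery_le_DOn2 {n₁ n₂ k₂ : ℕ} (f₂ : Slice n₂ k₂ → Bool) :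
    Dquery n₂ k₂ f₂ ≤ DOn (PP (B2 n₁ n₂) ∅ k₂) (F2 n₁ n₂ k₂ f₂) := by
  obtain ⟨T, hdep, hc⟩ := DOn_spec (PP (B2 n₁ n₂) ∅ k₂) (F2 n₁ n₂ k₂ f₂)
  refine Nat.sInf_le ⟨pull2 T, (pull2_depth T).trans hdep, fun A => ?_⟩
  rw [pull2_eval]
  have hP : PP (B2 n₁ n₂) ∅ k₂ (A.val.map (Fin.natAddEmb n₁)) :=
    ⟨Finset.map_subset_map.mpr (Finset.subset_univ _), Finset.empty_subset _,
      by rw [Finset.card_map]; exact A.prop⟩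
  rw [hc _ hP]
  simp only [F2, down2_map]
  rw [dif_pos A.prop]
  exact congrArg f₂ (Subtype.coe_eta A A.prop)

lemma nonempty_PP_B1 {n₁ n₂ k₁ : ℕ} (h₁ : k₁ ≤ n₁) : ∃ A, PP (B1 n₁ n₂) ∅ k₁ A := by
  obtain ⟨s, hsub, hcard⟩ :=
    Finset.exists_subset_card_eq (s := (Finset.univ : Finset (Fin n₁))) (n := k₁) (by simpa using h₁)
  exact ⟨s.map (Fin.castAddEmb n₂), Finset.map_subset_map.mpr (Finset.subset_univ _),
    Finset.empty_subset _, by rw [Finset.card_map]; exact hcard⟩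

lemma nonempty_PP_B2 {n₁ n₂ k₂ : ℕ} (h₂ : k₂ ≤ n₂) : ∃ A, PP (B2 n₁ n₂) ∅ k₂ A := by
  obtain ⟨s, hsub, hcard⟩ :=
    Finset.exists_subset_card_eq (s := (Finset.univ : Finset (Fin n₂))) (n := k₂) (by simpa using h₂)
  exact ⟨s.map (Fin.natAddEmb n₁), Finset.map_subset_map.mpr (Finset.subset_univ _),
    Finset.empty_subset _, by rw [Finset.card_map]; exact hcard⟩

/-- For `n = n₁ + n₂` and `k = k₁ + k₂` (with `kᵢ ≤ nᵢ`), one has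
`E_k(n) ≤ E_{k₁}(n₁) + E_{k₂}(n₂)`, equivalently
`D_k(n) ≥ D_{k₁}(n₁) + D_{k₂}(n₂)`. -/
theorem stmt_3 (n₁ n₂ k₁ k₂ : ℕ) (h₁ : k₁ ≤ n₁) (h₂ : k₂ ≤ n₂) :
    Equery (n₁ + n₂) (k₁ + k₂) ≤ Equery n₁ k₁ + Equery n₂ k₂ ∧
    Dmax n₁ k₁ + Dmax n₂ k₂ ≤ Dmax (n₁ + n₂) (k₁ + k₂) := by
  obtain ⟨f₁, hf₁⟩ := exists_Dmax n₁ k₁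
  obtain ⟨f₂, hf₂⟩ := exists_Dmax n₂ k₂
  have hdisj : Disjoint (B1 n₁ n₂) (B2 n₁ n₂) := by
    rw [Finset.disjoint_left]
    intro x hx1 hx2
    rw [mem_B1] at hx1
    rw [mem_B2] at hx2
    omega
  obtain ⟨T, hdep, hcT⟩ := Dquery_spec (n₁ + n₂) (k₁ + k₂) (gg n₁ n₂ k₁ k₂ f₁ f₂)
  have hcomp : ComputesOn T (PP (B1 n₁ n₂ ∪ B2 n₁ n₂) (∅ ∪ ∅) (k₁ + k₂))
      (GG n₁ n₂ k₁ k₂ f₁ f₂) := by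
    rintro A ⟨-, -, hk⟩
    exact hcT ⟨A, hk⟩
  have hmain := mainLemma T (B1 n₁ n₂) ∅ (B2 n₁ n₂) ∅ k₁ k₂
    (F1 n₁ n₂ k₁ f₁) (F2 n₁ n₂ k₂ f₂) (GG n₁ n₂ k₁ k₂ f₁ f₂)
    hdisj (nonempty_PP_B1 h₁) (nonempty_PP_B2 h₂) (fun A _ _ => rfl) hcomp
  have a1 := Dquery_le_DOn1 (n₂ := n₂) f₁
  have a2 := Dquery_le_DOn2 (n₁ := n₁) f₂
  have a3 := Dquery_le_Dmax (n₁ + n₂) (k₁ + k₂) (gg n₁ n₂ k₁ k₂ f₁ f₂)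
  have key : Dmax n₁ k₁ + Dmax n₂ k₂ ≤ Dmax (n₁ + n₂) (k₁ + k₂) := by omega
  have b1 := Dmax_le_n n₁ k₁
  have b2 := Dmax_le_n n₂ k₂
  refine ⟨?_, key⟩
  simp only [Equery]
  omega
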